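/- One-step error bound for approximate bisimulation: Let P be a δ-NN-bisimulation for N, let v be an (ε, P)-consistent valuation of layer i-1, let v̂ be any ε-abstraction of v, and let N' be any reduced network obtained by choosing representatives for pre-sums and biases. Then the one-step image [[N']]_i(v̂) is an ε'-abstraction of [[N]]_i(v), where ε' = a_i·ε + b_i with a_i = L(A_i)·|S_{i-1}|·||W_i||_∞ and b_i = L(A_i)·(|P_{i-1}|·||v||_∞ + 1)·δ, L(A_i) being a common Lipschitz constant of the activation functions of layer i. -/
import Mathlib


/-- One-step (layer) semantics of a neural network layer. -/
def layerSem {α β : Type*} [Fintype α] (W : α → β → ℝ) (b : β → ℝ) (A : β → ℝ → ℝ)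
    (v : α → ℝ) : β → ℝ :=
  fun s' => A s' ((∑ s, W s s' * v s) + b s')

open Classical in
/-- Pre-sum of a set of previous-layer nodes into a node `s'`. -/
noncomputable def preSum {α β : Type*} [Fintype α] (W : α → β → ℝ) (c : Set α) (s' : β) : ℝ :=
  ∑ s ∈ Finset.univ.filter (fun s => s ∈ c), W s s'

/-- A valuation is `P`-consistent if it is constant on classes. -/
def consistent {α : Type*} (P : Setoid α) (v : α → ℝ) : Prop :=
  ∀ s₁ s₂, P.r s₁ s₂ → v s₁ = v s₂

/-- One layer of the NN-bisimulation condition. -/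
def isBisimStep {α β : Type*} [Fintype α] (W : α → β → ℝ) (b : β → ℝ) (A : β → ℝ → ℝ)
    (Pp : Setoid α) (Pn : Setoid β) : Prop :=
  ∀ s₁ s₂ : β, Pn.r s₁ s₂ →
    A s₁ = A s₂ ∧ b s₁ = b s₂ ∧
    ∀ t : α, preSum W {x | Pp.r x t} s₁ = preSum W {x | Pp.r x t} s₂

/-- One layer of the δ-NN-bisimulation condition. -/
def isDeltaBisimStep {α β : Type*} [Fintype α] (W : α → β → ℝ) (b : β → ℝ) (A : β → ℝ → ℝ)
    (Pp : Setoid α) (Pn : Setoid β) (δ : ℝ) : Prop :=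
  ∀ s₁ s₂ : β, Pn.r s₁ s₂ →
    A s₁ = A s₂ ∧ |b s₁ - b s₂| ≤ δ ∧
    ∀ t : α, |preSum W {x | Pp.r x t} s₁ - preSum W {x | Pp.r x t} s₂| ≤ δ

/-- Semantics of the composition of the first `i` layers of a network. -/
def netSem (S : ℕ → Type) [∀ i, Fintype (S i)] (W : ∀ i, S i → S (i+1) → ℝ)
    (b : ∀ i, S (i+1) → ℝ) (A : ∀ i, S (i+1) → ℝ → ℝ) : (i : ℕ) → (S 0 → ℝ) → S i → ℝ
  | 0, v => v
  | (i+1), v => layerSem (W i) (b i) (A i) (netSem S W b A i v)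

/-- Quotient weights: pre-sum of a class into a representative. -/
noncomputable def qW {α β : Type*} [Fintype α] (Pp : Setoid α) (Pn : Setoid β)
    (W : α → β → ℝ) (c : Quotient Pp) (d : Quotient Pn) : ℝ :=
  preSum W {x | Quotient.mk Pp x = c} d.out

/-- Quotient bias via representative. -/
noncomputable def qb {β : Type*} (Pn : Setoid β) (b : β → ℝ) (d : Quotient Pn) : ℝ := b d.out

/-- Quotient activation via representative. -/
noncomputable def qA {β : Type*} (Pn : Setoid β) (A : β → ℝ → ℝ) (d : Quotient Pn) : ℝ → ℝ :=
  A d.out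

/-- Abstraction of a `P`-consistent valuation. -/
noncomputable def absVal {α : Type*} (P : Setoid α) (v : α → ℝ) (c : Quotient P) : ℝ := v c.out

/-- `vh` is an ε-abstraction of `v`. -/
def isEpsAbs {α : Type*} (P : Setoid α) (ε : ℝ) (v : α → ℝ) (vh : Quotient P → ℝ) : Prop :=
  ∀ s : α, |vh (Quotient.mk P s) - v s| ≤ ε

/-- `v` is (ε,P)-consistent. -/
def epsConsistent {α : Type*} (P : Setoid α) (ε : ℝ) (v : α → ℝ) : Prop :=
  ∀ s₁ s₂, P.r s₁ s₂ → |v s₁ - v s₂| ≤ ε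


lemma clamp_dist_sum (M a b : ℝ) (hb : -M ≤ b) (hb' : b ≤ M) :
    |a - max (-M) (min M a)| + |max (-M) (min M a) - b| ≤ |a - b| := by
  rcases le_total M a with h1 | h1
  · rw [min_eq_left h1, max_eq_right (by linarith)]
    rw [abs_of_nonneg (by linarith), abs_of_nonneg (by linarith),
      abs_of_nonneg (by linarith)]
    linarith
  · rw [min_eq_right h1]
    rcases le_total a (-M) with h2 | h2
    · rw [max_eq_left h2, abs_of_nonpos (by linarith), abs_of_nonpos (by linarith),
        abs_of_nonpos (by linarith)]
      linarith
    · rw [max_eq_right h2, sub_self, abs_zero, zero_add]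


/-- one-step error bound for δ-bisimulation. -/
theorem delta_bisim_one_step_bound {α β : Type*} [Fintype α]
    {Pp : Setoid α} {Pn : Setoid β} [Fintype (Quotient Pp)]
    (W : α → β → ℝ) (b : β → ℝ) (A : β → ℝ → ℝ)
    (δ ε L Wmax vmax : ℝ)
    (hL : ∀ (s' : β) (x y : ℝ), |A s' x - A s' y| ≤ L * |x - y|)
    (hbis : isDeltaBisimStep W b A Pp Pn δ)
    (hW : ∀ (s : α) (s' : β), |W s s'| ≤ Wmax)
    (v : α → ℝ) (hvmax : ∀ s, |v s| ≤ vmax)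
    (hv : epsConsistent Pp ε v)
    (vh : Quotient Pp → ℝ) (hvh : isEpsAbs Pp ε v vh)
    (Wq : Quotient Pp → Quotient Pn → ℝ) (bq : Quotient Pn → ℝ) (Aq : Quotient Pn → ℝ → ℝ)
    (hWq : ∀ (c : Quotient Pp) (d : Quotient Pn), ∃ s' : β, Quotient.mk Pn s' = d ∧
      Wq c d = preSum W {x | Quotient.mk Pp x = c} s')
    (hbq : ∀ d : Quotient Pn, ∃ s' : β, Quotient.mk Pn s' = d ∧ bq d = b s')
    (hAq : ∀ d : Quotient Pn, ∃ s' : β, Quotient.mk Pn s' = d ∧ Aq d = A s') :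
    isEpsAbs Pn
      (L * (Fintype.card α) * Wmax * ε + L * ((Fintype.card (Quotient Pp)) * vmax + 1) * δ)
      (layerSem W b A v) (layerSem Wq bq Aq vh) := by
  classical
  intro s'
  -- activation & bias of the representative
  obtain ⟨sA, hsA, hAeq⟩ := hAq (Quotient.mk Pn s')
  obtain ⟨sB, hsB, hbeq⟩ := hbq (Quotient.mk Pn s')
  have hA' : Aq (Quotient.mk Pn s') = A s' := by
    rw [hAeq]; exact (hbis sA s' (Quotient.exact hsA)).1
  have hb' : |bq (Quotient.mk Pn s') - b s'| ≤ δ := by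
    rw [hbeq]; exact (hbis sB s' (Quotient.exact hsB)).2.1
  have hδ0 : (0:ℝ) ≤ δ := le_trans (abs_nonneg _) hb'
  have hL0 : (0:ℝ) ≤ L := by
    have h := hL s' 1 0
    have h2 := abs_nonneg (A s' 1 - A s' 0)
    norm_num at h
    linarith
  -- fibers
  set F : Quotient Pp → Finset α := fun c => Finset.univ.filter (fun s => Quotient.mk Pp s = c)
    with hF
  have hpre : ∀ (c : Quotient Pp) (s'' : β),
      preSum W {x | Quotient.mk Pp x = c} s'' = ∑ s ∈ F c, W s s'' := by
    intro c s''
    unfold preSum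
    refine Finset.sum_congr ?_ (fun _ _ => rfl)
    ext x
    simp [hF, Set.mem_setOf_eq]
  have hFmem : ∀ (c : Quotient Pp) (s : α), s ∈ F c ↔ Quotient.mk Pp s = c := by
    intro c s; simp [hF]
  -- per-class bound
  have hclass : ∀ c : Quotient Pp,
      |Wq c (Quotient.mk Pn s') * vh c - ∑ s ∈ F c, W s s' * v s|
        ≤ (F c).card * (Wmax * ε) + vmax * δ := by
    intro c
    obtain ⟨s₂, hs₂, hWqc⟩ := hWq c (Quotient.mk Pn s')
    have hWqsum : Wq c (Quotient.mk Pn s') = ∑ s ∈ F c, W s s₂ := by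
      rw [hWqc, hpre]
    -- delta bound on presums
    have hΔ : |(∑ s ∈ F c, W s s₂) - ∑ s ∈ F c, W s s'| ≤ δ := by
      have h := (hbis s₂ s' (Quotient.exact hs₂)).2.2 (Quotient.out c)
      have hset : {x | Pp.r x (Quotient.out c)} = {x | Quotient.mk Pp x = c} := by
        ext x
        simp only [Set.mem_setOf_eq]
        constructor
        · intro hx
          rw [← Quotient.out_eq c]; exact Quotient.sound hx
        · intro hx
          exact Quotient.exact (hx.trans (Quotient.out_eq c).symm)
      rw [hset, hpre, hpre] at h
      exact h
    -- clamp
    set u : ℝ := max (-vmax) (min vmax (vh c)) with hu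
    have hout : (Quotient.out c) ∈ F c := by rw [hFmem]; exact Quotient.out_eq c
    have hvmax0 : (0:ℝ) ≤ vmax := le_trans (abs_nonneg _) (hvmax (Quotient.out c))
    have hWmax0 : (0:ℝ) ≤ Wmax := le_trans (abs_nonneg _) (hW (Quotient.out c) s')
    have huabs : |u| ≤ vmax := by
      rw [abs_le]
      constructor
      · exact le_max_left _ _
      · exact max_le (by linarith) (min_le_left _ _)
    -- identity
    have hid : Wq c (Quotient.mk Pn s') * vh c - ∑ s ∈ F c, W s s' * v s
        = (∑ s ∈ F c, (W s s₂ * (vh c - u) + W s s' * (u - v s)))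
          + (Wq c (Quotient.mk Pn s') - ∑ s ∈ F c, W s s') * u := by
      rw [hWqsum]
      simp only [mul_sub, sub_mul, Finset.sum_sub_distrib, Finset.sum_add_distrib,
        ← Finset.sum_mul]
      ring
    rw [hid]
    have hterm : ∀ s ∈ F c, |W s s₂ * (vh c - u) + W s s' * (u - v s)| ≤ Wmax * ε := by
      intro s hs
      have hsc : Quotient.mk Pp s = c := (hFmem c s).mp hs
      have hclose : |vh c - v s| ≤ ε := by rw [← hsc]; exact hvh s
      have hvs := abs_le.mp (hvmax s)
      have hclamp := clamp_dist_sum vmax (vh c) (v s) hvs.1 hvs.2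
      calc |W s s₂ * (vh c - u) + W s s' * (u - v s)|
          ≤ |W s s₂ * (vh c - u)| + |W s s' * (u - v s)| := abs_add_le _ _
        _ = |W s s₂| * |vh c - u| + |W s s'| * |u - v s| := by rw [abs_mul, abs_mul]
        _ ≤ Wmax * |vh c - u| + Wmax * |u - v s| := by
            gcongr
            · exact hW s s₂
            · exact hW s s'
        _ = Wmax * (|vh c - u| + |u - v s|) := by ring
        _ ≤ Wmax * ε := by
            apply mul_le_mul_of_nonneg_left _ hWmax0
            exact le_trans hclamp hclose
    calc |(∑ s ∈ F c, (W s s₂ * (vh c - u) + W s s' * (u - v s)))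
          + (Wq c (Quotient.mk Pn s') - ∑ s ∈ F c, W s s') * u|
        ≤ |∑ s ∈ F c, (W s s₂ * (vh c - u) + W s s' * (u - v s))|
          + |(Wq c (Quotient.mk Pn s') - ∑ s ∈ F c, W s s') * u| := abs_add_le _ _
      _ ≤ (F c).card * (Wmax * ε) + vmax * δ := by
          gcongr ?_ + ?_
          · calc |∑ s ∈ F c, (W s s₂ * (vh c - u) + W s s' * (u - v s))|
                ≤ ∑ s ∈ F c, |W s s₂ * (vh c - u) + W s s' * (u - v s)| :=
                  Finset.abs_sum_le_sum_abs _ _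
              _ ≤ (F c).card * (Wmax * ε) := by
                  calc ∑ s ∈ F c, |W s s₂ * (vh c - u) + W s s' * (u - v s)|
                      ≤ ∑ _s ∈ F c, Wmax * ε := Finset.sum_le_sum hterm
                    _ = (F c).card * (Wmax * ε) := by
                        rw [Finset.sum_const, nsmul_eq_mul]
          · rw [abs_mul, hWqsum]
            calc |(∑ s ∈ F c, W s s₂) - ∑ s ∈ F c, W s s'| * |u|
                ≤ δ * vmax := mul_le_mul hΔ huabs (abs_nonneg _) hδ0
              _ = vmax * δ := mul_comm _ _
  -- assemble the sum bound
  have hsplit : ∑ s, W s s' * v s = ∑ c : Quotient Pp, ∑ s ∈ F c, W s s' * v s :=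
    (Finset.sum_fiberwise _ (fun s => Quotient.mk Pp s) _).symm
  have hcard : ∑ c : Quotient Pp, ((F c).card : ℝ) = (Fintype.card α : ℝ) := by
    have : ∑ c : Quotient Pp, (F c).card = Fintype.card α := by
      rw [← Finset.card_univ]
      exact (Finset.card_eq_sum_card_fiberwise (fun s _ => Finset.mem_univ _)).symm
    exact_mod_cast congrArg (Nat.cast : ℕ → ℝ) this
  have key : |(∑ c : Quotient Pp, Wq c (Quotient.mk Pn s') * vh c) - ∑ s, W s s' * v s|
      ≤ (Fintype.card α) * (Wmax * ε) + (Fintype.card (Quotient Pp)) * (vmax * δ) := by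
    rw [hsplit, ← Finset.sum_sub_distrib]
    calc |∑ c : Quotient Pp, (Wq c (Quotient.mk Pn s') * vh c - ∑ s ∈ F c, W s s' * v s)|
        ≤ ∑ c : Quotient Pp, |Wq c (Quotient.mk Pn s') * vh c - ∑ s ∈ F c, W s s' * v s| :=
          Finset.abs_sum_le_sum_abs _ _
      _ ≤ ∑ c : Quotient Pp, ((F c).card * (Wmax * ε) + vmax * δ) :=
          Finset.sum_le_sum (fun c _ => hclass c)
      _ = (Fintype.card α) * (Wmax * ε) + (Fintype.card (Quotient Pp)) * (vmax * δ) := by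
          rw [Finset.sum_add_distrib, ← Finset.sum_mul, hcard, Finset.sum_const,
            nsmul_eq_mul, Finset.card_univ]
  -- final assembly
  simp only [layerSem, hA']
  calc |A s' ((∑ c : Quotient Pp, Wq c (Quotient.mk Pn s') * vh c) + bq (Quotient.mk Pn s'))
        - A s' ((∑ s, W s s' * v s) + b s')|
      ≤ L * |((∑ c : Quotient Pp, Wq c (Quotient.mk Pn s') * vh c) + bq (Quotient.mk Pn s'))
        - ((∑ s, W s s' * v s) + b s')| := hL s' _ _
    _ ≤ L * ((Fintype.card α) * (Wmax * ε) + (Fintype.card (Quotient Pp)) * (vmax * δ) + δ) := by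
        apply mul_le_mul_of_nonneg_left _ hL0
        calc |((∑ c : Quotient Pp, Wq c (Quotient.mk Pn s') * vh c) + bq (Quotient.mk Pn s'))
              - ((∑ s, W s s' * v s) + b s')|
            = |((∑ c : Quotient Pp, Wq c (Quotient.mk Pn s') * vh c) - ∑ s, W s s' * v s)
              + (bq (Quotient.mk Pn s') - b s')| := by ring_nf
          _ ≤ |(∑ c : Quotient Pp, Wq c (Quotient.mk Pn s') * vh c) - ∑ s, W s s' * v s|
              + |bq (Quotient.mk Pn s') - b s'| := abs_add_le _ _
          _ ≤ (Fintype.card α) * (Wmax * ε) + (Fintype.card (Quotient Pp)) * (vmax * δ) + δ := by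
              linarith [key, hb']
    _ = L * (Fintype.card α) * Wmax * ε + L * ((Fintype.card (Quotient Pp)) * vmax + 1) * δ := by
        ring
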